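/- For every multi-index A∈ℕ³ there is a constant C>0 such that for all p,q∈ℝ³, |∂^A_p [s(p,q)^{−1/2}]| ≤ C (q⁰)^{|A|} · s(p,q)^{−1/2}, where the derivatives are taken in the variable p. -/

import Mathlib

open Matrix

noncomputable section

/-- First-order partial derivative in the momentum variable `p_i`. -/
def pd (i : Fin 3) (f : (Fin 3 → ℝ) → ℝ) : (Fin 3 → ℝ) → ℝ :=
  fun p => fderiv ℝ f p (Pi.single i 1)

/-- Mixed partial derivative `∂^A` for a multi-index `A ∈ ℕ³`. -/
def multiDeriv (A : Fin 3 → ℕ) (f : (Fin 3 → ℝ) → ℝ) : (Fin 3 → ℝ) → ℝ :=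
  (pd 0)^[A 0] ((pd 1)^[A 1] ((pd 2)^[A 2] f))

/-- Total energy `s(p,q) = (p⁰+q⁰)² − |p+q|²` with `p⁰ = √(1+|p|²)` (orthonormal frame). -/
def sTot (p q : Fin 3 → ℝ) : ℝ :=
  (Real.sqrt (1 + p ⬝ᵥ p) + Real.sqrt (1 + q ⬝ᵥ q))^2 - (p + q) ⬝ᵥ (p + q)

def ww (x : Fin 3 → ℝ) : ℝ := Real.sqrt (1 + x ⬝ᵥ x)

lemma dot_self_nonneg (p : Fin 3 → ℝ) : 0 ≤ p ⬝ᵥ p :=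
  Finset.sum_nonneg fun i _ => mul_self_nonneg (p i)

lemma one_add_dot_pos (p : Fin 3 → ℝ) : 0 < 1 + p ⬝ᵥ p := by
  have := dot_self_nonneg p; linarith

lemma ww_pos (p : Fin 3 → ℝ) : 0 < ww p := Real.sqrt_pos.2 (one_add_dot_pos p)

lemma ww_one_le (p : Fin 3 → ℝ) : 1 ≤ ww p := by
  rw [ww, Real.one_le_sqrt]
  have := dot_self_nonneg p; linarith

lemma ww_sq (p : Fin 3 → ℝ) : ww p ^ 2 = 1 + p ⬝ᵥ p :=
  Real.sq_sqrt (one_add_dot_pos p).le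

lemma abs_coord_le_ww (p : Fin 3 → ℝ) (i : Fin 3) : |p i| ≤ ww p := by
  have h2 : p i * p i ≤ p ⬝ᵥ p :=
    Finset.single_le_sum (fun j _ => mul_self_nonneg (p j)) (Finset.mem_univ i)
  rw [← Real.sqrt_sq_eq_abs, ww]
  exact Real.sqrt_le_sqrt (by rw [sq]; linarith)

lemma dot_le_ww_mul (p q : Fin 3 → ℝ) : 1 + p ⬝ᵥ q ≤ ww p * ww q := by
  have hCS : (p ⬝ᵥ q)^2 ≤ (p ⬝ᵥ p) * (q ⬝ᵥ q) := by
    have h := Finset.sum_mul_sq_le_sq_mul_sq Finset.univ p q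
    have e1 : p ⬝ᵥ p = ∑ i, p i ^ 2 := by simp only [dotProduct, sq]
    have e2 : q ⬝ᵥ q = ∑ i, q i ^ 2 := by simp only [dotProduct, sq]
    rw [e1, e2]; exact h
  have h2 : 2 * (p ⬝ᵥ q) ≤ p ⬝ᵥ p + q ⬝ᵥ q := by
    simp only [dotProduct, Fin.sum_univ_three]
    nlinarith [sq_nonneg (p 0 - q 0), sq_nonneg (p 1 - q 1), sq_nonneg (p 2 - q 2)]
  have ha := ww_sq p
  have hb := ww_sq q
  nlinarith [mul_pos (ww_pos p) (ww_pos q), sq_nonneg (ww p * ww q + (1 + p ⬝ᵥ q)),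
    sq_nonneg (ww p * ww q - (1 + p ⬝ᵥ q))]

lemma s_eq (p q : Fin 3 → ℝ) : sTot p q = 2 + 2 * (ww q * ww p) - 2 * (p ⬝ᵥ q) := by
  have hp := ww_sq p
  have hq := ww_sq q
  rw [sTot, show Real.sqrt (1 + p ⬝ᵥ p) = ww p from rfl, show Real.sqrt (1 + q ⬝ᵥ q) = ww q from rfl]
  rw [dotProduct_add, add_dotProduct, add_dotProduct, dotProduct_comm q p]
  ring_nf
  nlinarith [hp, hq]

lemma s_ge_four (p q : Fin 3 → ℝ) : 4 ≤ sTot p q := by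
  rw [s_eq]
  have := dot_le_ww_mul p q
  linarith

lemma s_pos (p q : Fin 3 → ℝ) : 0 < sTot p q := lt_of_lt_of_le (by norm_num) (s_ge_four p q)

lemma sqrt_s_pos (p q : Fin 3 → ℝ) : 0 < Real.sqrt (sTot p q) := Real.sqrt_pos.2 (s_pos p q)

lemma s_inv_le_one (p q : Fin 3 → ℝ) : (sTot p q)⁻¹ ≤ 1 :=
  inv_le_one_of_one_le₀ (by linarith [s_ge_four p q])

lemma pd_add (i : Fin 3) {f g : (Fin 3 → ℝ) → ℝ} (hf : Differentiable ℝ f)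
    (hg : Differentiable ℝ g) :
    pd i (fun p => f p + g p) = fun p => pd i f p + pd i g p := by
  funext p
  simp only [pd, fderiv_fun_add (hf p) (hg p), ContinuousLinearMap.add_apply]

lemma pd_sub (i : Fin 3) {f g : (Fin 3 → ℝ) → ℝ} (hf : Differentiable ℝ f)
    (hg : Differentiable ℝ g) :
    pd i (fun p => f p - g p) = fun p => pd i f p - pd i g p := by
  funext p
  simp only [pd, fderiv_fun_sub (hf p) (hg p), ContinuousLinearMap.sub_apply]

lemma pd_mul (i : Fin 3) {f g : (Fin 3 → ℝ) → ℝ} (hf : Differentiable ℝ f)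
    (hg : Differentiable ℝ g) :
    pd i (fun p => f p * g p) = fun p => pd i f p * g p + f p * pd i g p := by
  funext p
  simp only [pd, fderiv_fun_mul (hf p) (hg p), ContinuousLinearMap.add_apply,
    ContinuousLinearMap.smul_apply, smul_eq_mul]
  ring

lemma pd_const (i : Fin 3) (c : ℝ) : pd i (fun _ => c) = fun _ => 0 := by
  funext p; simp [pd]

lemma pd_cmul (i : Fin 3) (c : ℝ) {f : (Fin 3 → ℝ) → ℝ} (hf : Differentiable ℝ f) :
    pd i (fun p => c * f p) = fun p => c * pd i f p := by
  funext p
  simp only [pd, fderiv_const_mul (hf p), ContinuousLinearMap.smul_apply, smul_eq_mul]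

lemma pd_inv (i : Fin 3) {f : (Fin 3 → ℝ) → ℝ} (hf : Differentiable ℝ f)
    (hne : ∀ p, f p ≠ 0) :
    pd i (fun p => (f p)⁻¹) = fun p => -(pd i f p) * ((f p)^2)⁻¹ := by
  funext p
  have h : HasFDerivAt (fun p => (f p)⁻¹) ((-(f p ^ 2)⁻¹) • fderiv ℝ f p) p :=
    (hasDerivAt_inv (hne p)).comp_hasFDerivAt p (hf p).hasFDerivAt
  rw [pd, h.fderiv]
  simp only [ContinuousLinearMap.smul_apply, smul_eq_mul, pd]
  ring

lemma pd_sqrt (i : Fin 3) {f : (Fin 3 → ℝ) → ℝ} (hf : Differentiable ℝ f)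
    (hpos : ∀ p, 0 < f p) :
    pd i (fun p => Real.sqrt (f p)) = fun p => pd i f p * (2 * Real.sqrt (f p))⁻¹ := by
  funext p
  have h : HasFDerivAt (fun p => Real.sqrt (f p))
      ((1 / (2 * Real.sqrt (f p))) • fderiv ℝ f p) p :=
    (Real.hasDerivAt_sqrt (hpos p).ne').comp_hasFDerivAt p (hf p).hasFDerivAt
  rw [pd, h.fderiv]
  simp only [ContinuousLinearMap.smul_apply, smul_eq_mul, pd]
  ring

lemma diff_sqrt_comp {f : (Fin 3 → ℝ) → ℝ} (hf : Differentiable ℝ f)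
    (hpos : ∀ p, 0 < f p) : Differentiable ℝ (fun p => Real.sqrt (f p)) := fun p =>
  ((Real.hasDerivAt_sqrt (hpos p).ne').comp_hasFDerivAt p (hf p).hasFDerivAt).differentiableAt

lemma diff_coord (j : Fin 3) : Differentiable ℝ (fun p : Fin 3 → ℝ => p j) :=
  (ContinuousLinearMap.proj j : (Fin 3 → ℝ) →L[ℝ] ℝ).differentiable

lemma pd_coord (i j : Fin 3) :
    pd i (fun p : Fin 3 → ℝ => p j) = fun _ => (Pi.single i 1 : Fin 3 → ℝ) j := by
  funext p
  rw [pd, show (fun p : Fin 3 → ℝ => p j)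
      = (ContinuousLinearMap.proj j : (Fin 3 → ℝ) →L[ℝ] ℝ) from rfl,
    ContinuousLinearMap.fderiv]
  rfl

lemma diff_dot_self : Differentiable ℝ (fun p : Fin 3 → ℝ => p ⬝ᵥ p) := by
  have : (fun p : Fin 3 → ℝ => p ⬝ᵥ p) = fun p => ∑ j, p j * p j := rfl
  rw [this]
  exact Differentiable.fun_sum fun j _ => (diff_coord j).fun_mul (diff_coord j)

lemma pd_dot_self (i : Fin 3) : pd i (fun p : Fin 3 → ℝ => p ⬝ᵥ p) = fun p => 2 * p i := by
  have e : (fun p : Fin 3 → ℝ => p ⬝ᵥ p) = fun p => ∑ j, p j * p j := rfl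
  funext p
  rw [e, pd]
  rw [fderiv_fun_sum (fun j _ => ((diff_coord j).fun_mul (diff_coord j)) p)]
  rw [ContinuousLinearMap.sum_apply]
  have key : ∀ j, (fderiv ℝ (fun p : Fin 3 → ℝ => p j * p j) p) (Pi.single i 1)
      = 2 * (p j * (Pi.single i 1 : Fin 3 → ℝ) j) := by
    intro j
    have h1 := congrFun (pd_mul i (diff_coord j) (diff_coord j)) p
    rw [pd] at h1
    rw [h1]
    rw [congrFun (pd_coord i j) p]
    ring
  rw [Finset.sum_congr rfl fun j _ => key j]
  simp only [Pi.single_apply, mul_ite, mul_one, mul_zero, Finset.sum_ite_eq', Finset.mem_univ,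
    if_true]

lemma diff_dot_right (q : Fin 3 → ℝ) : Differentiable ℝ (fun p : Fin 3 → ℝ => p ⬝ᵥ q) := by
  have : (fun p : Fin 3 → ℝ => p ⬝ᵥ q) = fun p => ∑ j, p j * q j := rfl
  rw [this]
  exact Differentiable.fun_sum fun j _ => (diff_coord j).fun_mul (differentiable_const _)

lemma pd_dot_right (i : Fin 3) (q : Fin 3 → ℝ) :
    pd i (fun p : Fin 3 → ℝ => p ⬝ᵥ q) = fun _ => q i := by
  have e : (fun p : Fin 3 → ℝ => p ⬝ᵥ q) = fun p => ∑ j, p j * q j := rfl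
  funext p
  rw [e, pd]
  rw [fderiv_fun_sum (fun j _ => ((diff_coord j).fun_mul (differentiable_const (q j))) p)]
  rw [ContinuousLinearMap.sum_apply]
  have key : ∀ j, (fderiv ℝ (fun p : Fin 3 → ℝ => p j * q j) p) (Pi.single i 1)
      = (Pi.single i 1 : Fin 3 → ℝ) j * q j := by
    intro j
    have h1 := congrFun (pd_mul i (diff_coord j) (differentiable_const (q j))) p
    rw [pd] at h1
    rw [h1]
    rw [congrFun (pd_coord i j) p, congrFun (pd_const i (q j)) p]
    ring
  rw [Finset.sum_congr rfl fun j _ => key j]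
  simp only [Pi.single_apply, ite_mul, one_mul, zero_mul, Finset.sum_ite_eq', Finset.mem_univ,
    if_true]

lemma diff_one_add_dot : Differentiable ℝ (fun p : Fin 3 → ℝ => 1 + p ⬝ᵥ p) :=
  (differentiable_const _).add diff_dot_self

lemma diff_ww : Differentiable ℝ ww :=
  diff_sqrt_comp diff_one_add_dot one_add_dot_pos

lemma pd_one_add_dot (i : Fin 3) :
    pd i (fun p : Fin 3 → ℝ => 1 + p ⬝ᵥ p) = fun p => 2 * p i := by
  have h := pd_add i (f := fun _ => (1:ℝ)) (g := fun p : Fin 3 → ℝ => p ⬝ᵥ p)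
    (differentiable_const _) diff_dot_self
  rw [h, pd_const, pd_dot_self]
  funext p; ring

lemma pd_ww (i : Fin 3) : pd i ww = fun p => p i * (ww p)⁻¹ := by
  have e : ww = fun p => Real.sqrt ((fun p : Fin 3 → ℝ => 1 + p ⬝ᵥ p) p) := rfl
  rw [e, pd_sqrt i diff_one_add_dot one_add_dot_pos]
  funext p
  rw [congrFun (pd_one_add_dot i) p]
  rw [show Real.sqrt (1 + p ⬝ᵥ p) = ww p from rfl]
  rw [mul_inv]
  ring_nf
  rfl


-- ## derivative of sTot in p
lemma diff_s (q : Fin 3 → ℝ) : Differentiable ℝ (fun p => sTot p q) := by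
  have e : (fun p => sTot p q) = fun p => 2 + 2 * (ww q * ww p) - 2 * (p ⬝ᵥ q) := by
    funext p; exact s_eq p q
  rw [e]
  exact (((differentiable_const _).add (((differentiable_const (ww q)).mul diff_ww).const_mul 2))).sub
    ((diff_dot_right q).const_mul 2)

lemma pd_s (i : Fin 3) (q : Fin 3 → ℝ) :
    pd i (fun p => sTot p q) = fun p => 2 * (ww q * (p i * (ww p)⁻¹)) - 2 * q i := by
  have e : (fun p => sTot p q)
      = fun p => (fun p => 2 + 2 * (ww q * ww p)) p - (fun p => 2 * (p ⬝ᵥ q)) p := by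
    funext p; exact s_eq p q
  have d1 : Differentiable ℝ (fun p : Fin 3 → ℝ => 2 + 2 * (ww q * ww p)) :=
    (differentiable_const _).add (((differentiable_const (ww q)).mul diff_ww).const_mul 2)
  have d2 : Differentiable ℝ (fun p : Fin 3 → ℝ => 2 * (p ⬝ᵥ q)) :=
    (diff_dot_right q).const_mul 2
  rw [e, pd_sub i d1 d2]
  funext p
  have e1 : (fun p : Fin 3 → ℝ => 2 + 2 * (ww q * ww p))
      = fun p => (fun _ => (2:ℝ)) p + (fun p => 2 * ((fun p => ww q * ww p) p)) p := rfl
  have h1 : pd i (fun p : Fin 3 → ℝ => 2 + 2 * (ww q * ww p)) p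
      = 2 * (ww q * (p i * (ww p)⁻¹)) := by
    rw [e1, pd_add i (differentiable_const _) (((differentiable_const (ww q)).fun_mul diff_ww).const_mul 2),
      pd_const, pd_cmul i 2 ((differentiable_const (ww q)).fun_mul diff_ww),
      pd_cmul i (ww q) diff_ww, pd_ww]
    simp
  have h2 : pd i (fun p : Fin 3 → ℝ => 2 * (p ⬝ᵥ q)) p = 2 * q i := by
    rw [pd_cmul i 2 (diff_dot_right q)]
    beta_reduce
    rw [congrFun (pd_dot_right i q) p]
  rw [h1, h2]

lemma diff_sqrt_s (q : Fin 3 → ℝ) :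
    Differentiable ℝ (fun p => Real.sqrt (sTot p q)) :=
  diff_sqrt_comp (diff_s q) (fun p => s_pos p q)

lemma diff_F (q : Fin 3 → ℝ) :
    Differentiable ℝ (fun p => (Real.sqrt (sTot p q))⁻¹) :=
  (diff_sqrt_s q).inv (fun p => (sqrt_s_pos p q).ne')

lemma diff_s_inv (q : Fin 3 → ℝ) : Differentiable ℝ (fun p => (sTot p q)⁻¹) :=
  (diff_s q).inv (fun p => (s_pos p q).ne')

lemma pd_s_inv (i : Fin 3) (q : Fin 3 → ℝ) :
    pd i (fun p => (sTot p q)⁻¹)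
      = fun p => -(2 * (ww q * (p i * (ww p)⁻¹)) - 2 * q i) * (((sTot p q))^2)⁻¹ := by
  rw [pd_inv i (diff_s q) (fun p => (s_pos p q).ne')]
  funext p
  rw [congrFun (pd_s i q) p]

lemma pd_F (i : Fin 3) (q : Fin 3 → ℝ) :
    pd i (fun p => (Real.sqrt (sTot p q))⁻¹)
      = fun p => (-1 : ℝ) * ((Real.sqrt (sTot p q))⁻¹ * (ww q * (1 * (p i * (ww p)⁻¹))) * (sTot p q)⁻¹)
          + (Real.sqrt (sTot p q))⁻¹ * q i * (sTot p q)⁻¹ := by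
  have e : (fun p => (Real.sqrt (sTot p q))⁻¹)
      = fun p => ((fun p => Real.sqrt (sTot p q)) p)⁻¹ := rfl
  rw [e, pd_inv i (diff_sqrt_s q) (fun p => (sqrt_s_pos p q).ne')]
  funext p
  have e2 : (fun p => Real.sqrt (sTot p q)) = fun p => Real.sqrt ((fun p => sTot p q) p) := rfl
  rw [e2, pd_sqrt i (diff_s q) (fun p => s_pos p q)]
  beta_reduce
  rw [congrFun (pd_s i q) p]
  have hs := s_pos p q
  have hsq := sqrt_s_pos p q
  have h2 : Real.sqrt (sTot p q) ^ 2 = sTot p q := Real.sq_sqrt hs.le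
  have hw := (ww_pos p).ne'
  rw [h2]
  field_simp
  ring


-- ## the bounded symbol class SB
inductive SB : ((Fin 3 → ℝ) → ℝ) → Prop
  | one : SB (fun _ => 1)
  | invw {β} : SB β → SB (fun p => β p * (ww p)⁻¹)
  | rho {β} (j : Fin 3) : SB β → SB (fun p => β p * (p j * (ww p)⁻¹))
  | zero : SB (fun _ => 0)
  | add {β γ} : SB β → SB γ → SB (fun p => β p + γ p)
  | smul (c : ℝ) {β} : SB β → SB (fun p => c * β p)

lemma SB.congr {β γ : (Fin 3 → ℝ) → ℝ} (hβ : SB β) (h : ∀ p, β p = γ p) : SB γ := by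
  have : β = γ := funext h
  exact this ▸ hβ

lemma diff_ww_inv : Differentiable ℝ (fun p => (ww p)⁻¹) :=
  diff_ww.inv fun p => (ww_pos p).ne'

lemma SB.diff {β} (hβ : SB β) : Differentiable ℝ β := by
  induction hβ with
  | one => exact differentiable_const _
  | invw hβ ih => exact ih.mul diff_ww_inv
  | rho j hβ ih => exact ih.mul ((diff_coord j).mul diff_ww_inv)
  | zero => exact differentiable_const _
  | add hβ hγ ih ihγ => exact ih.add ihγ
  | smul c hβ ih => exact ih.const_mul c

lemma pd_ww_inv (i : Fin 3) :
    pd i (fun p => (ww p)⁻¹) = fun p => -(p i * (ww p)⁻¹) * ((ww p)^2)⁻¹ := by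
  have e : (fun p => (ww p)⁻¹) = fun p => (ww p)⁻¹ := rfl
  rw [pd_inv i diff_ww fun p => (ww_pos p).ne']
  funext p
  rw [congrFun (pd_ww i) p]

lemma SB.bound {β} (hβ : SB β) : ∃ C, ∀ p, |β p| ≤ C := by
  induction hβ with
  | one => exact ⟨1, fun p => by norm_num⟩
  | @invw β hβ ih =>
    obtain ⟨C, hC⟩ := ih
    refine ⟨C, fun p => ?_⟩
    have h1 : |(ww p)⁻¹| ≤ 1 := by
      rw [abs_of_nonneg (inv_nonneg.2 (ww_pos p).le)]
      exact inv_le_one_of_one_le₀ (ww_one_le p)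
    have h0 : (0:ℝ) ≤ |β p| := abs_nonneg _
    calc |β p * (ww p)⁻¹| = |β p| * |(ww p)⁻¹| := abs_mul _ _
      _ ≤ |β p| * 1 := by nlinarith
      _ ≤ C := by rw [mul_one]; exact hC p
  | @rho β j hβ ih =>
    obtain ⟨C, hC⟩ := ih
    refine ⟨C, fun p => ?_⟩
    have h1 : |p j * (ww p)⁻¹| ≤ 1 := by
      rw [abs_mul, abs_of_nonneg (inv_nonneg.2 (ww_pos p).le)]
      calc |p j| * (ww p)⁻¹ ≤ ww p * (ww p)⁻¹ := by
            have := abs_coord_le_ww p j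
            have := inv_nonneg.2 (ww_pos p).le
            nlinarith
        _ = 1 := mul_inv_cancel₀ (ww_pos p).ne'
    have h0 : (0:ℝ) ≤ |β p| := abs_nonneg _
    have h2 : (0:ℝ) ≤ |p j * (ww p)⁻¹| := abs_nonneg _
    calc |β p * (p j * (ww p)⁻¹)| = |β p| * |p j * (ww p)⁻¹| := abs_mul _ _
      _ ≤ |β p| * 1 := by nlinarith
      _ ≤ C := by rw [mul_one]; exact hC p
  | zero => exact ⟨0, fun p => by norm_num⟩
  | add hβ hγ ihβ ihγ =>
    obtain ⟨C₁, h₁⟩ := ihβ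
    obtain ⟨C₂, h₂⟩ := ihγ
    exact ⟨C₁ + C₂, fun p => (abs_add_le _ _).trans (add_le_add (h₁ p) (h₂ p))⟩
  | smul c hβ ih =>
    obtain ⟨C, hC⟩ := ih
    refine ⟨|c| * C, fun p => ?_⟩
    rw [abs_mul]
    exact mul_le_mul_of_nonneg_left (hC p) (abs_nonneg c)


lemma SB.pd {β} (hβ : SB β) (i : Fin 3) : SB (pd i β) := by
  induction hβ with
  | one => exact SB.zero.congr fun p => (congrFun (pd_const i 1) p).symm
  | @invw β hβ ih =>
    refine SB.congr ((ih.invw).add ((((hβ.invw).rho i).invw).smul (-1))) fun p => ?_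
    rw [congrFun (pd_mul i hβ.diff diff_ww_inv) p, congrFun (pd_ww_inv i) p]
    rw [sq, mul_inv]
    ring
  | @rho β j hβ ih =>
    refine SB.congr ((ih.rho j).add
      (((hβ.invw).smul ((Pi.single i 1 : Fin 3 → ℝ) j)).add
        ((((hβ.rho j).rho i).invw).smul (-1)))) fun p => ?_
    have d1 : Differentiable ℝ (fun p : Fin 3 → ℝ => p j * (ww p)⁻¹) :=
      (diff_coord j).mul diff_ww_inv
    rw [congrFun (pd_mul i hβ.diff d1) p,
      congrFun (pd_mul i (diff_coord j) diff_ww_inv) p,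
      congrFun (pd_coord i j) p, congrFun (pd_ww_inv i) p]
    rw [sq, mul_inv]
    ring
  | zero => exact SB.zero.congr fun p => (congrFun (pd_const i 0) p).symm
  | @add β γ hβ hγ ihβ ihγ =>
    refine SB.congr (ihβ.add ihγ) fun p => ?_
    rw [congrFun (pd_add i hβ.diff hγ.diff) p]
  | @smul c β hβ ih =>
    refine SB.congr (ih.smul c) fun p => ?_
    rw [congrFun (pd_cmul i c hβ.diff) p]


-- ## the symbol class for derivatives of s^{-1/2}
inductive SGood : ℕ → ((Fin 3 → ℝ) → (Fin 3 → ℝ) → ℝ) → Prop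
  | base : SGood 0 (fun q p => (Real.sqrt (sTot p q))⁻¹)
  | mulB {k h β} : SGood k h → SB β →
      SGood (k+1) (fun q p => h q p * (ww q * β p) * (sTot p q)⁻¹)
  | mulQ {k h} (j : Fin 3) : SGood k h →
      SGood (k+1) (fun q p => h q p * q j * (sTot p q)⁻¹)
  | add {k h₁ h₂} : SGood k h₁ → SGood k h₂ → SGood k (fun q p => h₁ q p + h₂ q p)
  | smul (c : ℝ) {k h} : SGood k h → SGood k (fun q p => c * h q p)
  | mono {k h} : SGood k h → SGood (k+1) h

lemma SGood.congr {k} {h h' : (Fin 3 → ℝ) → (Fin 3 → ℝ) → ℝ} (hh : SGood k h)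
    (e : ∀ q p, h q p = h' q p) : SGood k h' := by
  have : h = h' := funext fun q => funext fun p => e q p
  exact this ▸ hh

lemma SGood.diff {k h} (hh : SGood k h) : ∀ q, Differentiable ℝ (h q) := by
  induction hh with
  | base => exact fun q => diff_F q
  | @mulB k h β hh hβ ih =>
    exact fun q => (((ih q).mul ((hβ.diff).const_mul (ww q))).mul (diff_s_inv q))
  | @mulQ k h j hh ih =>
    exact fun q => (((ih q).mul_const (q j)).mul (diff_s_inv q))
  | add hh₁ hh₂ ih₁ ih₂ => exact fun q => (ih₁ q).add (ih₂ q)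
  | smul c hh ih => exact fun q => (ih q).const_mul c
  | mono hh ih => exact ih

lemma SGood.bound {k h} (hh : SGood k h) :
    ∃ C > 0, ∀ q p, |h q p| ≤ C * ww q ^ k * (Real.sqrt (sTot p q))⁻¹ := by
  induction hh with
  | base =>
    refine ⟨1, one_pos, fun q p => ?_⟩
    rw [abs_of_nonneg (inv_nonneg.2 (sqrt_s_pos p q).le)]
    simp
  | @mulB k h β hh hβ ih =>
    obtain ⟨C, hC0, hC⟩ := ih
    obtain ⟨Cβ, hCβ⟩ := hβ.bound
    have hCβ0 : 0 ≤ Cβ := le_trans (abs_nonneg _) (hCβ 0)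
    refine ⟨C * (Cβ + 1), by positivity, fun q p => ?_⟩
    have wq0 : (0:ℝ) ≤ ww q := (ww_pos q).le
    have t0 : (0:ℝ) ≤ (Real.sqrt (sTot p q))⁻¹ := inv_nonneg.2 (sqrt_s_pos p q).le
    have u0 : (0:ℝ) ≤ (sTot p q)⁻¹ := inv_nonneg.2 (s_pos p q).le
    have hCk : (0:ℝ) ≤ C * ww q ^ k * (Real.sqrt (sTot p q))⁻¹ :=
      mul_nonneg (mul_nonneg hC0.le (pow_nonneg wq0 k)) t0
    calc |h q p * (ww q * β p) * (sTot p q)⁻¹|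
        = |h q p| * (ww q * |β p|) * (sTot p q)⁻¹ := by
          rw [abs_mul, abs_mul, abs_mul, abs_of_nonneg wq0, abs_of_nonneg u0]
      _ ≤ (C * ww q ^ k * (Real.sqrt (sTot p q))⁻¹) * (ww q * (Cβ + 1)) * (sTot p q)⁻¹ := by
          refine mul_le_mul_of_nonneg_right (mul_le_mul (hC q p) ?_ ?_ hCk) u0
          · exact mul_le_mul_of_nonneg_left (le_trans (hCβ p) (by linarith)) wq0
          · exact mul_nonneg wq0 (abs_nonneg _)
      _ ≤ (C * ww q ^ k * (Real.sqrt (sTot p q))⁻¹) * (ww q * (Cβ + 1)) * 1 := by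
          refine mul_le_mul_of_nonneg_left (s_inv_le_one p q) ?_
          exact mul_nonneg hCk (mul_nonneg wq0 (by linarith))
      _ = (C * (Cβ + 1)) * ww q ^ (k+1) * (Real.sqrt (sTot p q))⁻¹ := by
          rw [pow_succ]; ring
  | @mulQ k h j hh ih =>
    obtain ⟨C, hC0, hC⟩ := ih
    refine ⟨C, hC0, fun q p => ?_⟩
    have wq0 : (0:ℝ) ≤ ww q := (ww_pos q).le
    have t0 : (0:ℝ) ≤ (Real.sqrt (sTot p q))⁻¹ := inv_nonneg.2 (sqrt_s_pos p q).le
    have u0 : (0:ℝ) ≤ (sTot p q)⁻¹ := inv_nonneg.2 (s_pos p q).le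
    have hCk : (0:ℝ) ≤ C * ww q ^ k * (Real.sqrt (sTot p q))⁻¹ :=
      mul_nonneg (mul_nonneg hC0.le (pow_nonneg wq0 k)) t0
    calc |h q p * q j * (sTot p q)⁻¹|
        = |h q p| * |q j| * (sTot p q)⁻¹ := by
          rw [abs_mul, abs_mul, abs_of_nonneg u0]
      _ ≤ (C * ww q ^ k * (Real.sqrt (sTot p q))⁻¹) * ww q * (sTot p q)⁻¹ := by
          exact mul_le_mul_of_nonneg_right
            (mul_le_mul (hC q p) (abs_coord_le_ww q j) (abs_nonneg _) hCk) u0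
      _ ≤ (C * ww q ^ k * (Real.sqrt (sTot p q))⁻¹) * ww q * 1 := by
          exact mul_le_mul_of_nonneg_left (s_inv_le_one p q) (mul_nonneg hCk wq0)
      _ = C * ww q ^ (k+1) * (Real.sqrt (sTot p q))⁻¹ := by
          rw [pow_succ]; ring
  | @add k h₁ h₂ hh₁ hh₂ ih₁ ih₂ =>
    obtain ⟨C₁, hC₁0, hC₁⟩ := ih₁
    obtain ⟨C₂, hC₂0, hC₂⟩ := ih₂
    refine ⟨C₁ + C₂, by linarith, fun q p => ?_⟩
    calc |h₁ q p + h₂ q p| ≤ |h₁ q p| + |h₂ q p| := abs_add_le _ _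
      _ ≤ C₁ * ww q ^ k * (Real.sqrt (sTot p q))⁻¹ + C₂ * ww q ^ k * (Real.sqrt (sTot p q))⁻¹ :=
          add_le_add (hC₁ q p) (hC₂ q p)
      _ = (C₁ + C₂) * ww q ^ k * (Real.sqrt (sTot p q))⁻¹ := by ring
  | @smul c k h hh ih =>
    obtain ⟨C, hC0, hC⟩ := ih
    refine ⟨(|c| + 1) * C, by positivity, fun q p => ?_⟩
    have h1 : |c * h q p| = |c| * |h q p| := abs_mul _ _
    have h2 : |c| * |h q p| ≤ |c| * (C * ww q ^ k * (Real.sqrt (sTot p q))⁻¹) :=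
      mul_le_mul_of_nonneg_left (hC q p) (abs_nonneg c)
    have h3 : (0:ℝ) ≤ C * ww q ^ k * (Real.sqrt (sTot p q))⁻¹ :=
      mul_nonneg (mul_nonneg hC0.le (pow_nonneg (ww_pos q).le k))
        (inv_nonneg.2 (sqrt_s_pos p q).le)
    calc |c * h q p| ≤ |c| * (C * ww q ^ k * (Real.sqrt (sTot p q))⁻¹) := by
          rw [h1]; exact h2
      _ ≤ (|c| + 1) * (C * ww q ^ k * (Real.sqrt (sTot p q))⁻¹) :=
          mul_le_mul_of_nonneg_right (by linarith) h3
      _ = (|c| + 1) * C * ww q ^ k * (Real.sqrt (sTot p q))⁻¹ := by ring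
  | @mono k h hh ih =>
    obtain ⟨C, hC0, hC⟩ := ih
    refine ⟨C, hC0, fun q p => ?_⟩
    refine le_trans (hC q p) ?_
    have hp : ww q ^ k ≤ ww q ^ (k+1) :=
      pow_le_pow_right₀ (ww_one_le q) (Nat.le_succ k)
    have t0 : (0:ℝ) ≤ (Real.sqrt (sTot p q))⁻¹ := inv_nonneg.2 (sqrt_s_pos p q).le
    have := mul_le_mul_of_nonneg_left hp hC0.le
    exact mul_le_mul_of_nonneg_right this t0


lemma SGood.pd {k h} (hh : SGood k h) (i : Fin 3) :
    SGood (k+1) (fun q => pd i (h q)) := by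
  induction hh with
  | base =>
    refine SGood.congr (((SGood.base.mulB (SB.one.rho i)).smul (-1)).add (SGood.base.mulQ i))
      fun q p => ?_
    exact (congrFun (pd_F i q) p).symm
  | @mulB k h β hh hβ ih =>
    have G := hh.mulB hβ
    refine SGood.congr ((ih.mulB hβ).add (((hh.mulB (hβ.pd i)).mono).add
      (((G.mulB (SB.one.rho i)).smul (-2)).add ((G.mulQ i).smul 2)))) fun q p => ?_
    have d1 : Differentiable ℝ (fun p => h q p * (ww q * β p)) :=
      (hh.diff q).mul ((hβ.diff).const_mul (ww q))
    have e : (fun p => h q p * (ww q * β p) * (sTot p q)⁻¹)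
        = fun p => (fun p => h q p * (ww q * β p)) p * ((fun p => (sTot p q)⁻¹) p) := rfl
    beta_reduce
    rw [e, congrFun (pd_mul i d1 (diff_s_inv q)) p]
    rw [congrFun (pd_mul i (hh.diff q) ((hβ.diff).const_mul (ww q))) p]
    rw [congrFun (pd_cmul i (ww q) hβ.diff) p]
    rw [congrFun (pd_s_inv i q) p]
    rw [sq, mul_inv]
    ring
  | @mulQ k h j hh ih =>
    have G := hh.mulQ j
    refine SGood.congr ((ih.mulQ j).add
      (((G.mulB (SB.one.rho i)).smul (-2)).add ((G.mulQ i).smul 2))) fun q p => ?_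
    have d1 : Differentiable ℝ (fun p => h q p * q j) := (hh.diff q).mul_const (q j)
    have e : (fun p => h q p * q j * (sTot p q)⁻¹)
        = fun p => (fun p => h q p * q j) p * ((fun p => (sTot p q)⁻¹) p) := rfl
    beta_reduce
    rw [e, congrFun (pd_mul i d1 (diff_s_inv q)) p]
    rw [congrFun (pd_mul i (hh.diff q) (differentiable_const (q j))) p]
    rw [congrFun (pd_const i (q j)) p]
    rw [congrFun (pd_s_inv i q) p]
    rw [sq, mul_inv]
    ring
  | @add k h₁ h₂ hh₁ hh₂ ih₁ ih₂ =>
    refine SGood.congr (ih₁.add ih₂) fun q p => ?_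
    exact (congrFun (pd_add i (hh₁.diff q) (hh₂.diff q)) p).symm
  | @smul c k h hh ih =>
    refine SGood.congr (ih.smul c) fun q p => ?_
    exact (congrFun (pd_cmul i c (hh.diff q)) p).symm
  | @mono k h hh ih => exact ih.mono

lemma SGood.iter (i : Fin 3) (n : ℕ) : ∀ {k h}, SGood k h →
    SGood (k+n) (fun q => (_root_.pd i)^[n] (h q)) := by
  induction n with
  | zero => intro k h hh; simpa using hh
  | succ n ih =>
    intro k h hh
    have h1 := ih (SGood.pd hh i)
    have e : k + 1 + n = k + (n + 1) := by omega
    rw [e] at h1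
    refine SGood.congr h1 fun q p => ?_
    rw [Function.iterate_succ_apply]

/-- **Derivatives of `s^{−1/2}`**: for every multi-index `A` there is `C > 0` with
`|∂^A_p [s(p,q)^{−1/2}]| ≤ C (q⁰)^{|A|} s(p,q)^{−1/2}` for all `p, q ∈ ℝ³`. -/
theorem multiDeriv_inv_sqrt_sTot (A : Fin 3 → ℕ) :
    ∃ C > 0, ∀ p q : Fin 3 → ℝ,
      |multiDeriv A (fun x => (Real.sqrt (sTot x q))⁻¹) p|
        ≤ C * Real.sqrt (1 + q ⬝ᵥ q) ^ (∑ i, A i) * (Real.sqrt (sTot p q))⁻¹ := by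
  have h2 := SGood.iter 2 (A 2) SGood.base
  have h1 := SGood.iter 1 (A 1) h2
  have h0 := SGood.iter 0 (A 0) h1
  obtain ⟨C, hC0, hC⟩ := h0.bound
  refine ⟨C, hC0, fun p q => ?_⟩
  have e : ∑ i, A i = 0 + A 2 + A 1 + A 0 := by
    rw [Fin.sum_univ_three]; omega
  rw [e]
  exact hC q p

end
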